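/- For positive real numbers x ≥ y > 1, the Gamma function satisfies x^{x-1}/y^{y-1} · e^{y-x} ≤ Γ(x)/Γ(y) ≤ x^{x-1/2}/y^{y-1/2} · e^{y-x}. -/

import Mathlib

open Real Filter Topology Set Nat

namespace KV

local notation "γ" => Real.eulerMascheroniConstant

noncomputable def f : ℝ → ℝ := Real.log ∘ Real.Gamma
noncomputable def ψ : ℝ → ℝ := deriv f

lemma hder {x : ℝ} (hx : 0 < x) : DifferentiableAt ℝ f x := by
  refine ((Real.differentiableAt_Gamma ?_).log (Real.Gamma_ne_zero ?_)) <;>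
    exact fun m ↦ ((neg_nonpos.mpr m.cast_nonneg).trans_lt hx).ne'

lemma h_rec (x : ℝ) (hx : 0 < x) : f (x + 1) = f x + Real.log x := by
  simp only [f, Function.comp_apply, Real.Gamma_add_one hx.ne',
    Real.log_mul hx.ne' (Real.Gamma_pos_of_pos hx).ne', add_comm]

lemma ψ_rec (x : ℝ) (hx : 0 < x) : ψ (x + 1) = ψ x + 1 / x := by
  unfold ψ
  rw [← deriv_comp_add_const, one_div, ← Real.deriv_log,
    ← deriv_add (hder hx) (Real.differentiableAt_log hx.ne')]
  apply Filter.EventuallyEq.deriv_eq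
  filter_upwards [eventually_gt_nhds hx] using h_rec

lemma ψ_nat (n : ℕ) : ψ (n + 1) = -γ + harmonic n := by
  unfold ψ f
  rw [Function.comp_def, deriv.log (Real.differentiableAt_Gamma
      (fun m ↦ by have := m.cast_nonneg (α := ℝ); intro h; linarith)) (by positivity),
    Real.deriv_Gamma_nat, Real.Gamma_nat_eq_factorial, mul_comm, mul_div_assoc,
    div_self (by positivity), mul_one]

lemma ψ_mono : MonotoneOn ψ (Ioi 0) :=
  Real.convexOn_log_Gamma.monotoneOn_deriv fun x hx ↦ hder hx

lemma tendsto_log_sub_log (c d : ℝ) :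
    Tendsto (fun n : ℕ ↦ Real.log (n + c) - Real.log (n + d)) atTop (𝓝 0) := by
  have h1 : Tendsto (fun n : ℕ ↦ (c - d) / (n + d)) atTop (𝓝 0) := by
    apply Tendsto.div_atTop tendsto_const_nhds
    exact tendsto_atTop_add_const_right _ d tendsto_natCast_atTop_atTop
  have h2 : Tendsto (fun n : ℕ ↦ 1 + (c - d) / (n + d)) atTop (𝓝 1) := by
    simpa using h1.const_add 1
  have h3 : Tendsto (fun n : ℕ ↦ Real.log (1 + (c - d) / (n + d))) atTop (𝓝 0) := by
    simpa using h2.log one_ne_zero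
  apply h3.congr'
  filter_upwards [eventually_gt_atTop (Nat.ceil (max (1 - c) (max (1 - d) 0)))] with n hn
  have hn' : (max (1 - c) (max (1 - d) 0)) < n := lt_of_le_of_lt (Nat.le_ceil _)
    (by exact_mod_cast hn)
  have hc : (0:ℝ) < n + c := by
    have := lt_of_le_of_lt (le_max_left (1-c) _) hn'; linarith
  have hd : (0:ℝ) < n + d := by
    have := lt_of_le_of_lt ((le_max_left (1-d) 0).trans (le_max_right (1-c) _)) hn'; linarith
  rw [show 1 + (c - d) / ((n:ℝ) + d) = (n + c)/(n + d) by field_simp; ring,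
    Real.log_div hc.ne' hd.ne']

lemma tendsto_inv_shift (c : ℝ) : Tendsto (fun n : ℕ ↦ 1 / ((n:ℝ) + c)) atTop (𝓝 0) :=
  Tendsto.div_atTop tendsto_const_nhds
    (tendsto_atTop_add_const_right _ c tendsto_natCast_atTop_atTop)

/-- lower digamma bound: `log t - 1/t ≤ ψ t` for `t ≥ 1`. -/
lemma psi_lb {t : ℝ} (ht : 1 ≤ t) : Real.log t - 1 / t ≤ ψ t := by
  have ht0 : (0:ℝ) < t := by linarith
  -- one-step decrease of v(s) = ψ s - log s + 1/s
  have step : ∀ s : ℝ, 1 ≤ s →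
      ψ (s+1) - Real.log (s+1) + 1/(s+1) ≤ ψ s - Real.log s + 1/s := by
    intro s hs
    have hs0 : (0:ℝ) < s := by linarith
    have hs1 : (0:ℝ) < s + 1 := by linarith
    rw [ψ_rec s hs0]
    have hlog : Real.log (s/(s+1)) ≤ s/(s+1) - 1 :=
      Real.log_le_sub_one_of_pos (by positivity)
    rw [Real.log_div hs0.ne' hs1.ne'] at hlog
    have heq : s/(s+1) - 1 = -(1/(s+1)) := by field_simp; ring
    rw [heq] at hlog
    linarith
  -- iterate
  have iter : ∀ n : ℕ, ψ (t+n) - Real.log (t+n) + 1/(t+n) ≤ ψ t - Real.log t + 1/t := by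
    intro n
    induction n with
    | zero => simp
    | succ n ih =>
      have h1 : 1 ≤ t + n := by have := n.cast_nonneg (α := ℝ); linarith
      have h2 := step (t+n) h1
      push_cast
      rw [show t + ((n:ℝ)+1) = (t+(n:ℝ))+1 from by ring]
      linarith
  -- lower bound each term
  have hb : ∀ n : ℕ, (-γ + harmonic n) - Real.log (t+n) ≤ ψ t - Real.log t + 1/t := by
    intro n
    have h1 : (0:ℝ) < t + n := by have := n.cast_nonneg (α := ℝ); linarith
    have hmono : ψ ((n:ℝ) + 1) ≤ ψ (t + n) := by
      apply ψ_mono (by simp [mem_Ioi]; positivity) (mem_Ioi.mpr h1)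
      have := n.cast_nonneg (α := ℝ); linarith
    rw [ψ_nat n] at hmono
    have := iter n
    have hinv : 0 ≤ 1/(t+n) := by positivity
    linarith
  -- take the limit
  have hlim : Tendsto (fun n : ℕ ↦ (-γ + (harmonic n : ℝ)) - Real.log (t+n)) atTop (𝓝 0) := by
    have h1 : Tendsto (fun n : ℕ ↦ ((harmonic n : ℝ) - Real.log n) - γ) atTop (𝓝 0) := by
      simpa using Real.tendsto_harmonic_sub_log.sub_const γ
    have h2 := tendsto_log_sub_log 0 t
    have := h1.add h2
    simp only [add_zero] at this
    apply this.congr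
    intro n; skip; ring_nf
  have := le_of_tendsto hlim (Eventually.of_forall hb)
  linarith

/-- `log s ≤ (s - s⁻¹)/2` for `s ≥ 1`. -/
lemma log_le_half_sub {s : ℝ} (hs : 1 ≤ s) : Real.log s ≤ (s - s⁻¹) / 2 := by
  have key : MonotoneOn (fun x : ℝ ↦ (x - x⁻¹)/2 - Real.log x) (Ici 1) := by
    apply monotoneOn_of_deriv_nonneg (convex_Ici 1)
    · intro x hx
      have hx0 : (0:ℝ) < x := lt_of_lt_of_le one_pos hx
      exact (((((hasDerivAt_id x).sub (hasDerivAt_inv hx0.ne')).div_const 2).sub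
        (Real.hasDerivAt_log hx0.ne')).differentiableAt).continuousAt.continuousWithinAt
    · intro x hx
      rw [interior_Ici] at hx
      have hx0 : (0:ℝ) < x := lt_trans one_pos hx
      exact (((((hasDerivAt_id x).sub (hasDerivAt_inv hx0.ne')).div_const 2).sub
        (Real.hasDerivAt_log hx0.ne')).differentiableAt).differentiableWithinAt
    · intro x hx
      rw [interior_Ici] at hx
      have hx0 : (0:ℝ) < x := lt_trans one_pos hx
      have hd : HasDerivAt (fun x : ℝ ↦ (x - x⁻¹)/2 - Real.log x)
          ((1 - -(x^2)⁻¹)/2 - x⁻¹) x :=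
        (((hasDerivAt_id x).sub (hasDerivAt_inv hx0.ne')).div_const 2).sub
          (Real.hasDerivAt_log hx0.ne')
      rw [hd.deriv]
      have e1 : (x^2)⁻¹ * x^2 = 1 := inv_mul_cancel₀ (by positivity)
      have e2 : x⁻¹ * x = 1 := inv_mul_cancel₀ hx0.ne'
      have e3 : (x^2)⁻¹ = x⁻¹ * x⁻¹ := by rw [sq, mul_inv]
      nlinarith [sq_nonneg (x⁻¹ - 1), inv_pos.mpr hx0]
  have h1 := key (self_mem_Ici) hs hs
  simpa using h1

/-- upper digamma bound: `ψ t ≤ log t - 1/(2t)` for `t ≥ 1`. -/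
lemma psi_ub {t : ℝ} (ht : 1 ≤ t) : ψ t ≤ Real.log t - 1 / (2 * t) := by
  have ht0 : (0:ℝ) < t := by linarith
  -- one-step increase of u(s) = ψ s - log s + 1/(2s)
  have step : ∀ s : ℝ, 1 ≤ s →
      ψ s - Real.log s + 1/(2*s) ≤ ψ (s+1) - Real.log (s+1) + 1/(2*(s+1)) := by
    intro s hs
    have hs0 : (0:ℝ) < s := by linarith
    have hs1 : (0:ℝ) < s + 1 := by linarith
    rw [ψ_rec s hs0]
    have hr1 : (1:ℝ) ≤ (s+1)/s := by rw [le_div_iff₀ hs0]; linarith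
    have hlog := log_le_half_sub hr1
    rw [Real.log_div hs1.ne' hs0.ne'] at hlog
    have heq : ((s+1)/s - ((s+1)/s)⁻¹)/2 = (2*s+1)/(2*s*(s+1)) := by
      rw [inv_div]
      field_simp
      ring
    rw [heq] at hlog
    have heq2 : (2*s+1)/(2*s*(s+1)) = 1/s - 1/(2*s) + 1/(2*(s+1)) := by
      field_simp
      ring
    rw [heq2] at hlog
    linarith
  -- iterate
  have iter : ∀ n : ℕ, ψ t - Real.log t + 1/(2*t) ≤
      ψ (t+n) - Real.log (t+n) + 1/(2*(t+n)) := by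
    intro n
    induction n with
    | zero => simp
    | succ n ih =>
      have h1 : 1 ≤ t + n := by have := n.cast_nonneg (α := ℝ); linarith
      have h2 := step (t+n) h1
      push_cast
      rw [show t + ((n:ℝ)+1) = (t+(n:ℝ))+1 from by ring]
      linarith
  -- upper bound each term, with m = ⌈t⌉₊
  set m : ℕ := Nat.ceil t with hm
  have htm : t ≤ m := Nat.le_ceil t
  have hb : ∀ n : ℕ, ψ t - Real.log t + 1/(2*t) ≤
      (-γ + harmonic (m+n)) - Real.log (t+n) + 1/(2*(t+n)) := by
    intro n
    have h1 : (0:ℝ) < t + n := by have := n.cast_nonneg (α := ℝ); linarith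
    have hmono : ψ (t + n) ≤ ψ (((m+n:ℕ):ℝ) + 1) := by
      apply ψ_mono (mem_Ioi.mpr h1) (by simp [mem_Ioi]; positivity)
      push_cast; linarith
    rw [ψ_nat (m+n)] at hmono
    have := iter n
    linarith
  -- the bound sequence tends to 0
  have hlim : Tendsto (fun n : ℕ ↦ (-γ + (harmonic (m+n) : ℝ)) - Real.log (t+n)
      + 1/(2*(t+n))) atTop (𝓝 0) := by
    have h1 : Tendsto (fun n : ℕ ↦ ((harmonic (m+n) : ℝ) - Real.log (m+n)) - γ)
        atTop (𝓝 0) := by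
      have := (Real.tendsto_harmonic_sub_log.comp (tendsto_add_atTop_nat m)).sub_const γ
      simp only [sub_self] at this
      apply this.congr
      intro n
      simp only [Function.comp_apply]
      rw [Nat.add_comm n m]
      push_cast
      ring
    have h2 := tendsto_log_sub_log (m : ℝ) t
    have h3 : Tendsto (fun n : ℕ ↦ 1/(2*(t+(n:ℝ)))) atTop (𝓝 0) := by
      have := (tendsto_inv_shift t).div_const 2
      simp only [zero_div] at this
      apply this.congr
      intro n
      rw [div_div]
      ring_nf
    have := (h1.add h2).add h3
    simp only [add_zero] at this
    apply this.congr
    intro n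
    push_cast
    ring_nf
  have := ge_of_tendsto hlim (Eventually.of_forall hb)
  linarith

lemma hasDerivAt_F {t : ℝ} (ht : 0 < t) :
    HasDerivAt (fun t : ℝ ↦ f t - (t-1) * Real.log t + t)
      (ψ t - (1 * Real.log t + (t-1) * t⁻¹) + 1) t := by
  exact (((hder ht).hasDerivAt.sub (((hasDerivAt_id t).sub_const 1).mul
    (Real.hasDerivAt_log ht.ne'))).add (hasDerivAt_id t))

lemma F_mono : MonotoneOn (fun t : ℝ ↦ f t - (t-1) * Real.log t + t) (Ici 1) := by
  apply monotoneOn_of_deriv_nonneg (convex_Ici 1)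
  · intro x hx
    exact (hasDerivAt_F (lt_of_lt_of_le one_pos hx)).differentiableAt.continuousAt.continuousWithinAt
  · intro x hx
    rw [interior_Ici] at hx
    exact (hasDerivAt_F (lt_trans one_pos hx)).differentiableAt.differentiableWithinAt
  · intro x hx
    rw [interior_Ici] at hx
    have hx0 : (0:ℝ) < x := lt_trans one_pos hx
    rw [(hasDerivAt_F hx0).deriv]
    have := psi_lb hx.le
    have e : (x-1) * x⁻¹ = 1 - 1/x := by field_simp
    rw [e]
    linarith

lemma hasDerivAt_G {t : ℝ} (ht : 0 < t) :
    HasDerivAt (fun t : ℝ ↦ (t - 1/2) * Real.log t - t - f t)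
      ((1 * Real.log t + (t - 1/2) * t⁻¹) - 1 - ψ t) t := by
  exact ((((hasDerivAt_id t).sub_const (1/2)).mul
    (Real.hasDerivAt_log ht.ne')).sub (hasDerivAt_id t)).sub (hder ht).hasDerivAt

lemma G_mono : MonotoneOn (fun t : ℝ ↦ (t - 1/2) * Real.log t - t - f t) (Ici 1) := by
  apply monotoneOn_of_deriv_nonneg (convex_Ici 1)
  · intro x hx
    exact (hasDerivAt_G (lt_of_lt_of_le one_pos hx)).differentiableAt.continuousAt.continuousWithinAt
  · intro x hx
    rw [interior_Ici] at hx
    exact (hasDerivAt_G (lt_trans one_pos hx)).differentiableAt.differentiableWithinAt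
  · intro x hx
    rw [interior_Ici] at hx
    have hx0 : (0:ℝ) < x := lt_trans one_pos hx
    rw [(hasDerivAt_G hx0).deriv]
    have := psi_ub hx.le
    have e : (x - 1/2) * x⁻¹ = 1 - 1/(2*x) := by field_simp
    rw [e]
    linarith

end KV

theorem stmt_6 (x y : ℝ) (hy : 1 < y) (hxy : y ≤ x) :
    x ^ (x - 1) / y ^ (y - 1) * Real.exp (y - x) ≤ Real.Gamma x / Real.Gamma y ∧
    Real.Gamma x / Real.Gamma y ≤ x ^ (x - 1 / 2) / y ^ (y - 1 / 2) * Real.exp (y - x) := by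
  have hy0 : (0:ℝ) < y := by linarith
  have hx0 : (0:ℝ) < x := by linarith
  have hΓy : 0 < Real.Gamma y := Real.Gamma_pos_of_pos hy0
  have hΓx : 0 < Real.Gamma x := Real.Gamma_pos_of_pos hx0
  have hyI : y ∈ Set.Ici (1:ℝ) := hy.le
  have hxI : x ∈ Set.Ici (1:ℝ) := by simp; linarith
  have hF := KV.F_mono hyI hxI hxy
  have hG := KV.G_mono hyI hxI hxy
  simp only [KV.f, Function.comp_apply] at hF hG
  have hlogdiv : Real.log (Real.Gamma x / Real.Gamma y)
      = Real.log (Real.Gamma x) - Real.log (Real.Gamma y) :=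
    Real.log_div hΓx.ne' hΓy.ne'
  constructor
  · rw [Real.rpow_def_of_pos hx0, Real.rpow_def_of_pos hy0, ← Real.exp_sub, ← Real.exp_add,
      show Real.Gamma x / Real.Gamma y = Real.exp (Real.log (Real.Gamma x / Real.Gamma y))
        from (Real.exp_log (by positivity)).symm, hlogdiv]
    apply Real.exp_le_exp.mpr
    nlinarith [hF]
  · rw [Real.rpow_def_of_pos hx0, Real.rpow_def_of_pos hy0, ← Real.exp_sub, ← Real.exp_add,
      show Real.Gamma x / Real.Gamma y = Real.exp (Real.log (Real.Gamma x / Real.Gamma y))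
        from (Real.exp_log (by positivity)).symm, hlogdiv]
    apply Real.exp_le_exp.mpr
    nlinarith [hG]
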